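/- Let ν be a probability measure on [0,∞) with ν((0,∞)) > 0 whose cumulative distribution function F satisfies lim_{x→∞} x^{2α} (1 − F(x)) = 0. Then the α-moment m = ∫_{[0,∞)} x^α ν(dx) is finite and positive, and for every integer n ≥ 2, the tail F̄_n = 1 − F_n satisfies lim_{x→∞} x^{2α} F̄_n(x) = (1/2) n (n−1) m². -/

import Mathlib

open MeasureTheory Filter Real Topology

private lemma geom_aux (g : ℝ) (k : ℕ) :
    (1 - g) * ∑ j ∈ Finset.range k, g ^ j = 1 - g ^ k := by
  calc (1 - g) * ∑ j ∈ Finset.range k, g ^ j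
      = -((∑ j ∈ Finset.range k, g ^ j) * (g - 1)) := by ring
    _ = 1 - g ^ k := by rw [geom_sum_mul]; ring

private lemma key_id (n : ℕ) (hn : 1 ≤ n) (g u : ℝ) :
    1 - g ^ (n - 1) * ((n : ℝ) * u + g) =
      (1 - g - u) * (∑ k ∈ Finset.range n, g ^ k) +
        u * ((1 - g) *
          ∑ k ∈ Finset.range n, g ^ k * ∑ j ∈ Finset.range (n - 1 - k), g ^ j) := by
  obtain ⟨m, rfl⟩ : ∃ m, n = m + 1 := ⟨n - 1, (Nat.succ_pred_eq_of_pos hn).symm⟩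
  simp only [Nat.add_sub_cancel]
  have h1 : (1 - g) * ∑ k ∈ Finset.range (m + 1), g ^ k = 1 - g ^ (m + 1) :=
    geom_aux g (m + 1)
  have h2 : (1 - g) * ∑ k ∈ Finset.range (m + 1), g ^ k * ∑ j ∈ Finset.range (m - k), g ^ j
      = (∑ k ∈ Finset.range (m + 1), g ^ k) - (m + 1 : ℝ) * g ^ m := by
    rw [Finset.mul_sum]
    have hterm : ∀ k ∈ Finset.range (m + 1),
        (1 - g) * (g ^ k * ∑ j ∈ Finset.range (m - k), g ^ j) = g ^ k - g ^ m := by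
      intro k hk
      have hk' : k ≤ m := Nat.lt_succ_iff.mp (Finset.mem_range.mp hk)
      have hpow : g ^ k * g ^ (m - k) = g ^ m := by
        rw [← pow_add, Nat.add_sub_cancel' hk']
      calc (1 - g) * (g ^ k * ∑ j ∈ Finset.range (m - k), g ^ j)
          = g ^ k * ((1 - g) * ∑ j ∈ Finset.range (m - k), g ^ j) := by ring
        _ = g ^ k * (1 - g ^ (m - k)) := by rw [geom_aux]
        _ = g ^ k - g ^ k * g ^ (m - k) := by ring
        _ = g ^ k - g ^ m := by rw [hpow]
    rw [Finset.sum_congr rfl hterm, Finset.sum_sub_distrib, Finset.sum_const,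
      Finset.card_range]
    ring
  push_cast
  linear_combination (-1 : ℝ) * h1 - u * h2

/-- if ν((0,∞)) > 0 and x^{2α}(1 − F(x)) → 0 as x → ∞, then the α-moment
m = ∫ x^α ν(dx) is finite and positive and, for every n ≥ 2,
lim_{x→∞} x^{2α} F̄_n(x) = (1/2) n(n−1) m². -/
theorem kendall_power_tail_light_tail
    (α : ℝ) (hα : 0 < α)
    (ν : Measure ℝ) [IsProbabilityMeasure ν] (hν : ν (Set.Iio 0) = 0)
    (hpos : 0 < ν (Set.Ioi 0))
    (F G H : ℝ → ℝ)
    (hF : ∀ t, F t = (ν (Set.Iic t)).toReal)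
    (hG : ∀ t, 0 < t → G t = ∫ x, max (1 - (x / t) ^ α) 0 ∂ν)
    (hH : ∀ t, 0 < t → H t = ∫ x in Set.Icc 0 t, x ^ α ∂ν)
    (htail : Tendsto (fun x => x ^ (2 * α) * (1 - F x)) atTop (𝓝 0))
    (n : ℕ) (hn : 2 ≤ n)
    (Fn : ℝ → ℝ)
    (hFn : ∀ t, 0 < t → Fn t = (G t) ^ (n - 1) * ((n : ℝ) * t ^ (-α) * H t + G t)) :
    Integrable (fun x => x ^ α) ν ∧ 0 < ∫ x, x ^ α ∂ν ∧
    Tendsto (fun x => x ^ (2 * α) * (1 - Fn x)) atTop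
      (𝓝 ((n : ℝ) * ((n : ℝ) - 1) / 2 * (∫ x, x ^ α ∂ν) ^ 2)) := by
  have hn1 : 1 ≤ n := le_trans one_le_two hn
  -- a.e. nonnegativity
  have hnn : ∀ᵐ x ∂ν, 0 ≤ x := by
    rw [ae_iff]
    have hs : {x : ℝ | ¬ 0 ≤ x} = Set.Iio 0 := by ext x; simp [not_le]
    rw [hs]; exact hν
  have hmeas : Measurable fun x : ℝ => x ^ α :=
    (Real.continuous_rpow_const hα.le).measurable
  have hαnn : 0 ≤ᵐ[ν] fun x : ℝ => x ^ α := by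
    filter_upwards [hnn] with x hx using Real.rpow_nonneg hx _
  -- tail measure in terms of F
  have hIoiReal : ∀ t : ℝ, (ν (Set.Ioi t)).toReal = 1 - F t := by
    intro t
    have h1 : ν (Set.Ioi t) = 1 - ν (Set.Iic t) := by
      rw [← Set.compl_Iic]
      exact prob_compl_eq_one_sub measurableSet_Iic
    rw [h1, hF, ENNReal.toReal_sub_of_le prob_le_one (by simp)]
    simp
  -- an explicit tail bound
  obtain ⟨T₀', hT₀'⟩ := eventually_atTop.mp
    (htail.eventually_le_const (show (0:ℝ) < 1 by norm_num))
  set T₀ : ℝ := max T₀' 1 with hT₀def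
  have hT₀1 : (1:ℝ) ≤ T₀ := le_max_right _ _
  have hT₀pos : (0:ℝ) < T₀ := lt_of_lt_of_le one_pos hT₀1
  have htail_bound : ∀ t : ℝ, T₀ ≤ t → ν (Set.Ioi t) ≤ ENNReal.ofReal (t ^ (-(2*α))) := by
    intro t ht
    have htpos : (0:ℝ) < t := lt_of_lt_of_le hT₀pos ht
    have h1 : t ^ (2*α) * (1 - F t) ≤ 1 := hT₀' t (le_trans (le_max_left _ _) ht)
    have h2 : (0:ℝ) < t ^ (2*α) := Real.rpow_pos_of_pos htpos _
    have h3 : 1 - F t ≤ t ^ (-(2*α)) := by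
      have h4 := mul_le_mul_of_nonneg_left h1 (inv_nonneg.mpr h2.le)
      rw [mul_one, ← mul_assoc, inv_mul_cancel₀ h2.ne'] at h4
      rw [Real.rpow_neg htpos.le]
      linarith
    rw [ENNReal.le_ofReal_iff_toReal_le (measure_ne_top ν _)
      (Real.rpow_nonneg htpos.le _), hIoiReal]
    exact h3
  -- Integrability of x ^ α
  have hInt : Integrable (fun x : ℝ => x ^ α) ν := by
    refine ⟨hmeas.aestronglyMeasurable, ?_⟩
    rw [hasFiniteIntegral_iff_ofReal hαnn]
    have hmaxmeas : Measurable fun a : ℝ => (max a 0) ^ α :=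
      hmeas.comp (measurable_id.max measurable_const)
    have hcongr : ∫⁻ x, ENNReal.ofReal (x ^ α) ∂ν
        = ∫⁻ x, ENNReal.ofReal ((max x 0) ^ α) ∂ν := by
      refine lintegral_congr_ae ?_
      filter_upwards [hnn] with x hx
      rw [max_eq_left hx]
    rw [hcongr, lintegral_eq_lintegral_meas_lt ν
      (Eventually.of_forall fun x => Real.rpow_nonneg (le_max_right x 0) _)
      hmaxmeas.aemeasurable]
    have hset : ∀ t ∈ Set.Ioi (0:ℝ),
        ν {a : ℝ | t < (max a 0) ^ α} = ν (Set.Ioi (t ^ α⁻¹)) := by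
      intro t ht
      rw [Set.mem_Ioi] at ht
      congr 1
      ext a
      simp only [Set.mem_setOf_eq, Set.mem_Ioi]
      constructor
      · intro h
        have hmaxpos : 0 < max a 0 := by
          by_contra hc
          push_neg at hc
          have : max a 0 = 0 := le_antisymm hc (le_max_right a 0)
          rw [this, Real.zero_rpow hα.ne'] at h
          exact absurd h (not_lt.mpr ht.le)
        have hapos : 0 < a := by
          rcases lt_max_iff.mp hmaxpos with h' | h'
          · exact h'
          · exact absurd h' (lt_irrefl 0)
        have h1 : t ^ α⁻¹ < (max a 0 ^ α) ^ α⁻¹ :=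
          Real.rpow_lt_rpow ht.le h (by positivity)
        rw [Real.rpow_rpow_inv (le_max_right a 0) hα.ne', max_eq_left hapos.le] at h1
        exact h1
      · intro h
        have h0 : (0:ℝ) < t ^ α⁻¹ := Real.rpow_pos_of_pos ht _
        have ha0 : 0 < a := lt_trans h0 h
        have h1 : (t ^ α⁻¹) ^ α < a ^ α :=
          Real.rpow_lt_rpow (Real.rpow_nonneg ht.le _) h hα
        rw [Real.rpow_inv_rpow ht.le hα.ne'] at h1
        rwa [max_eq_left ha0.le]
    rw [setLIntegral_congr_fun measurableSet_Ioi hset]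
    set c : ℝ := T₀ ^ α with hcdef
    have hcpos : (0:ℝ) < c := Real.rpow_pos_of_pos hT₀pos α
    have hsplit : Set.Ioi (0:ℝ) = Set.Ioc 0 c ∪ Set.Ioi c :=
      (Set.Ioc_union_Ioi_eq_Ioi hcpos.le).symm
    rw [hsplit, lintegral_union measurableSet_Ioi Set.Ioc_disjoint_Ioi_same]
    have hpiece1 : ∫⁻ t in Set.Ioc 0 c, ν (Set.Ioi (t ^ α⁻¹)) < ⊤ := by
      calc ∫⁻ t in Set.Ioc 0 c, ν (Set.Ioi (t ^ α⁻¹))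
          ≤ ∫⁻ _ in Set.Ioc 0 c, 1 := lintegral_mono fun t => prob_le_one
        _ = 1 * volume (Set.Ioc 0 c) := setLIntegral_const _ _
        _ < ⊤ := by
            rw [one_mul, Real.volume_Ioc]
            exact ENNReal.ofReal_lt_top
    have hpiece2 : ∫⁻ t in Set.Ioi c, ν (Set.Ioi (t ^ α⁻¹)) < ⊤ := by
      have hb : ∀ᵐ t ∂(volume.restrict (Set.Ioi c)),
          ν (Set.Ioi (t ^ α⁻¹)) ≤ ENNReal.ofReal (t ^ (-2 : ℝ)) := by
        filter_upwards [ae_restrict_mem measurableSet_Ioi] with t ht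
        rw [Set.mem_Ioi] at ht
        have htpos : (0:ℝ) < t := lt_trans hcpos ht
        have hT : T₀ ≤ t ^ α⁻¹ := by
          have h1 : c ^ α⁻¹ ≤ t ^ α⁻¹ :=
            Real.rpow_le_rpow hcpos.le ht.le (by positivity)
          rwa [hcdef, Real.rpow_rpow_inv hT₀pos.le hα.ne'] at h1
        have h2 := htail_bound _ hT
        have h3 : (t ^ α⁻¹) ^ (-(2*α)) = t ^ (-2 : ℝ) := by
          rw [← Real.rpow_mul htpos.le]
          congr 1
          field_simp
        rwa [h3] at h2
      calc ∫⁻ t in Set.Ioi c, ν (Set.Ioi (t ^ α⁻¹))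
          ≤ ∫⁻ t in Set.Ioi c, ENNReal.ofReal (t ^ (-2 : ℝ)) := lintegral_mono_ae hb
        _ < ⊤ := (integrableOn_Ioi_rpow_of_lt (by norm_num) hcpos).lintegral_lt_top
    exact ENNReal.add_lt_top.mpr ⟨hpiece1, hpiece2⟩
  refine ⟨hInt, ?_, ?_⟩
  · -- positivity of the moment
    rcases (integral_nonneg_of_ae hαnn).lt_or_eq with h | h
    · exact h
    · exfalso
      have hz : (fun x : ℝ => x ^ α) =ᵐ[ν] 0 :=
        (integral_eq_zero_iff_of_nonneg_ae hαnn hInt).mp h.symm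
      have hz' : ∀ᵐ x ∂ν, x ^ α = 0 := by
        filter_upwards [hz] with x hx; simpa using hx
      have hsub : Set.Ioi (0:ℝ) ⊆ {x : ℝ | ¬ x ^ α = 0} := fun x hx =>
        (Real.rpow_pos_of_pos hx α).ne'
      exact absurd (measure_mono_null hsub (ae_iff.mp hz')) hpos.ne'
  -- convergence part
  set mI : ℝ := ∫ x, x ^ α ∂ν with hmI
  have hH_tendsto : Tendsto H atTop (𝓝 mI) := by
    have hcov : AECover ν atTop (fun t : ℝ => Set.Iic t) := aecover_Iic tendsto_id
    have h1 := hcov.integral_tendsto_of_countably_generated hInt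
    apply h1.congr'
    filter_upwards [eventually_gt_atTop 0] with t ht
    rw [hH t ht]
    refine setIntegral_congr_set ?_
    rw [eventuallyEq_set]
    filter_upwards [hnn] with x hx
    simp only [Set.mem_Iic, Set.mem_Icc]
    exact ⟨fun h => ⟨hx, h⟩, fun h => h.2⟩
  -- formula for G
  have hGF : ∀ t : ℝ, 0 < t → G t = F t - t ^ (-α) * H t := by
    intro t ht
    have htα : (0:ℝ) < t ^ α := Real.rpow_pos_of_pos ht α
    have hfmeas : Measurable fun x : ℝ => max (1 - (x / t) ^ α) 0 :=
      (measurable_const.sub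
        (hmeas.comp (measurable_id.div_const t))).max measurable_const
    have hfint : Integrable (fun x : ℝ => max (1 - (x / t) ^ α) 0) ν := by
      refine ⟨hfmeas.aestronglyMeasurable, ?_⟩
      apply HasFiniteIntegral.of_bounded (C := 1)
      filter_upwards [hnn] with x hx
      have h0 : (0:ℝ) ≤ max (1 - (x / t) ^ α) 0 := le_max_right _ _
      have h1 : max (1 - (x / t) ^ α) 0 ≤ 1 := by
        apply max_le _ zero_le_one
        have : 0 ≤ (x / t) ^ α := Real.rpow_nonneg (div_nonneg hx ht.le) _
        linarith
      rw [Real.norm_eq_abs, abs_le]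
      exact ⟨by linarith, h1⟩
    have hsplit := integral_add_compl
      (measurableSet_Icc : MeasurableSet (Set.Icc (0:ℝ) t)) hfint
    have hcompl : ∫ x in (Set.Icc (0:ℝ) t)ᶜ, max (1 - (x / t) ^ α) 0 ∂ν = 0 := by
      apply integral_eq_zero_of_ae
      filter_upwards [ae_restrict_of_ae hnn,
        ae_restrict_mem measurableSet_Icc.compl] with x hx hmem
      have hxt : t < x := by
        simp only [Set.mem_compl_iff, Set.mem_Icc, not_and, not_le] at hmem
        exact hmem hx
      have h1 : 1 < (x / t) ^ α := by
        rw [Real.one_lt_rpow_iff_of_pos (div_pos (lt_trans ht hxt) ht)]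
        exact Or.inl ⟨(one_lt_div ht).mpr hxt, hα⟩
      show max (1 - (x / t) ^ α) 0 = 0
      exact max_eq_right (by linarith)
    have hmain : ∫ x in Set.Icc 0 t, max (1 - (x / t) ^ α) 0 ∂ν
        = (ν (Set.Icc 0 t)).toReal - (∫ x in Set.Icc 0 t, x ^ α ∂ν) * (t ^ α)⁻¹ := by
      rw [setIntegral_congr_fun (g := fun x => 1 - x ^ α * (t ^ α)⁻¹) measurableSet_Icc ?_]
      · rw [integral_sub (integrable_const 1).integrableOn
          ((hInt.mul_const _).integrableOn), setIntegral_const,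
          integral_mul_const]
        simp [measureReal_def]
      · intro x hx
        obtain ⟨hx0, hxt⟩ := hx
        have hdiv : (x / t) ^ α = x ^ α * (t ^ α)⁻¹ := by
          rw [Real.div_rpow hx0 ht.le, div_eq_mul_inv]
        show max (1 - (x / t) ^ α) 0 = 1 - x ^ α * (t ^ α)⁻¹
        rw [max_eq_left, hdiv]
        have : (x / t) ^ α ≤ 1 :=
          Real.rpow_le_one (div_nonneg hx0 ht.le) ((div_le_one ht).mpr hxt) hα.le
        linarith
    have hν' : ν (Set.Icc 0 t) = ν (Set.Iic t) := by
      have hu : Set.Iic t = Set.Iio 0 ∪ Set.Icc 0 t := by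
        ext x
        simp only [Set.mem_Iic, Set.mem_union, Set.mem_Icc, Set.mem_Iio]
        constructor
        · intro h
          rcases lt_or_ge x 0 with h0 | h0
          · exact Or.inl h0
          · exact Or.inr ⟨h0, h⟩
        · rintro (h | ⟨_, h⟩)
          · exact le_trans h.le ht.le
          · exact h
      rw [hu]
      have hle : ν (Set.Icc 0 t) ≤ ν (Set.Iio 0 ∪ Set.Icc 0 t) :=
        measure_mono Set.subset_union_right
      have hge : ν (Set.Iio 0 ∪ Set.Icc 0 t) ≤ ν (Set.Icc 0 t) := by
        calc ν (Set.Iio 0 ∪ Set.Icc 0 t) ≤ ν (Set.Iio 0) + ν (Set.Icc 0 t) :=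
              measure_union_le _ _
          _ = ν (Set.Icc 0 t) := by rw [hν, zero_add]
      exact le_antisymm hle hge
    rw [hG t ht, ← hsplit, hcompl, add_zero, hmain, hν', ← hF, ← hH t ht,
      Real.rpow_neg ht.le]
    ring
  -- limits
  have hBa : Tendsto (fun t => t ^ α * (t ^ (-α) * H t)) atTop (𝓝 mI) := by
    apply hH_tendsto.congr'
    filter_upwards [eventually_gt_atTop 0] with t ht
    rw [Real.rpow_neg ht.le, ← mul_assoc,
      mul_inv_cancel₀ (Real.rpow_pos_of_pos ht α).ne', one_mul]
  have hB0 : Tendsto (fun t => t ^ (-α) * H t) atTop (𝓝 0) := by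
    have := (tendsto_rpow_neg_atTop hα).mul hH_tendsto
    simpa using this
  have hA0' : Tendsto (fun t => t ^ α * (1 - F t)) atTop (𝓝 0) := by
    have h := htail.mul (tendsto_rpow_neg_atTop hα)
    rw [zero_mul] at h
    apply h.congr'
    filter_upwards [eventually_gt_atTop 0] with t ht
    have h2 : t ^ (2*α) * t ^ (-α) = t ^ α := by
      rw [← Real.rpow_add ht]; ring_nf
    calc t ^ (2*α) * (1 - F t) * t ^ (-α)
        = t ^ (2*α) * t ^ (-α) * (1 - F t) := by ring
      _ = t ^ α * (1 - F t) := by rw [h2]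
  have hA0 : Tendsto (fun t => 1 - F t) atTop (𝓝 0) := by
    have h := htail.mul (tendsto_rpow_neg_atTop (by positivity : (0:ℝ) < 2*α))
    rw [zero_mul] at h
    apply h.congr'
    filter_upwards [eventually_gt_atTop 0] with t ht
    have h2 : t ^ (2*α) * t ^ (-(2*α)) = 1 := by
      rw [← Real.rpow_add ht]; simp
    calc t ^ (2*α) * (1 - F t) * t ^ (-(2*α))
        = t ^ (2*α) * t ^ (-(2*α)) * (1 - F t) := by ring
      _ = 1 - F t := by rw [h2, one_mul]
  have hG1 : Tendsto G atTop (𝓝 1) := by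
    have h : Tendsto (fun t => (1 - (1 - F t)) - t ^ (-α) * H t) atTop (𝓝 1) := by
      have := ((tendsto_const_nhds (x := (1:ℝ)) (f := atTop)).sub hA0).sub hB0
      simpa using this
    apply h.congr'
    filter_upwards [eventually_gt_atTop 0] with t ht
    rw [hGF t ht]
    ring
  -- sum functionals
  have hSG : Tendsto (fun t => ∑ k ∈ Finset.range n, G t ^ k) atTop (𝓝 (n : ℝ)) := by
    have hc : Continuous fun g : ℝ => ∑ k ∈ Finset.range n, g ^ k :=
      continuous_finset_sum _ fun k _ => continuous_pow k
    have hval : ∑ k ∈ Finset.range n, (1:ℝ) ^ k = (n : ℝ) := by simp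
    rw [← hval]
    exact (hc.tendsto 1).comp hG1
  have hTG : Tendsto
      (fun t => ∑ k ∈ Finset.range n, G t ^ k * ∑ j ∈ Finset.range (n - 1 - k), G t ^ j)
      atTop (𝓝 ((n : ℝ) * ((n : ℝ) - 1) / 2)) := by
    have hc : Continuous fun g : ℝ =>
        ∑ k ∈ Finset.range n, g ^ k * ∑ j ∈ Finset.range (n - 1 - k), g ^ j :=
      continuous_finset_sum _ fun k _ =>
        (continuous_pow k).mul (continuous_finset_sum _ fun j _ => continuous_pow j)
    have hval : ∑ k ∈ Finset.range n, (1:ℝ) ^ k * ∑ j ∈ Finset.range (n - 1 - k), (1:ℝ) ^ j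
        = (n : ℝ) * ((n : ℝ) - 1) / 2 := by
      simp only [one_pow, one_mul, Finset.sum_const, Finset.card_range, nsmul_eq_mul,
        mul_one]
      rw [← Nat.cast_sum]
      rw [show ∑ k ∈ Finset.range n, (n - 1 - k) = ∑ k ∈ Finset.range n, k from
        Finset.sum_range_reflect (fun j => j) n]
      have h3 := Finset.sum_range_id_mul_two n
      have h4 := congrArg (Nat.cast : ℕ → ℝ) h3
      rw [Nat.cast_mul, Nat.cast_mul, Nat.cast_sub hn1, Nat.cast_ofNat, Nat.cast_one] at h4
      linarith
    rw [← hval]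
    exact (hc.tendsto 1).comp hG1
  -- assemble
  have hfinal := (htail.mul hSG).add ((hBa.mul (hA0'.add hBa)).mul hTG)
  have hval : (0 : ℝ) * (n : ℝ) + mI * (0 + mI) * ((n : ℝ) * ((n : ℝ) - 1) / 2)
      = (n : ℝ) * ((n : ℝ) - 1) / 2 * mI ^ 2 := by ring
  rw [hval] at hfinal
  apply hfinal.congr'
  filter_upwards [eventually_gt_atTop 0] with t ht
  rw [hFn t ht]
  have hu : (n : ℝ) * t ^ (-α) * H t + G t = (n : ℝ) * (t ^ (-α) * H t) + G t := by
    ring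
  rw [hu]
  have hid := key_id n hn1 (G t) (t ^ (-α) * H t)
  have h2α : t ^ (2*α) = t ^ α * t ^ α := by
    rw [← Real.rpow_add ht]; ring_nf
  have hGt : G t = F t - t ^ (-α) * H t := hGF t ht
  calc t ^ (2*α) * (1 - F t) * (∑ k ∈ Finset.range n, G t ^ k)
        + t ^ α * (t ^ (-α) * H t) * (t ^ α * (1 - F t) + t ^ α * (t ^ (-α) * H t))
          * (∑ k ∈ Finset.range n, G t ^ k * ∑ j ∈ Finset.range (n - 1 - k), G t ^ j)
      = t ^ (2*α) * ((1 - G t - t ^ (-α) * H t) * (∑ k ∈ Finset.range n, G t ^ k)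
          + (t ^ (-α) * H t) * ((1 - G t) *
            ∑ k ∈ Finset.range n, G t ^ k * ∑ j ∈ Finset.range (n - 1 - k), G t ^ j)) := by
        rw [h2α]
        rw [hGt]
        ring
    _ = t ^ (2*α) * (1 - G t ^ (n - 1) * ((n : ℝ) * (t ^ (-α) * H t) + G t)) := by
        rw [← hid]
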